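/- The function f : [0,1] → ℝ defined by f(x) := h((1 − √x)/2) is concave on [0,1], where h is the binary entropy function h(q) := −q log₂ q − (1−q) log₂(1−q) (with h(0) = h(1) = 0). -/

import Mathlib

noncomputable section

/-- The base-2 binary entropy function `h(q) = −q log₂ q − (1−q) log₂ (1−q)`
(with the convention `0 · log₂ 0 = 0`, automatic in Lean). -/
def binEnt (q : ℝ) : ℝ := -q * Real.logb 2 q - (1 - q) * Real.logb 2 (1 - q)

open Real Set

lemma binEnt_eq (q : ℝ) : binEnt q = Real.binEntropy q / Real.log 2 := by
  simp only [binEnt, Real.binEntropy, Real.logb, Real.log_inv]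
  ring


lemma phi_hasDerivAt {t : ℝ} (ht : t ∈ Set.Ioo (-1:ℝ) 1) :
    HasDerivAt (fun t : ℝ => 2*t/(1-t^2) - (Real.log (1+t) - Real.log (1-t)))
      (4*t^2/(1-t^2)^2) t := by
  obtain ⟨ht1, ht2⟩ := ht
  have h1 : (0:ℝ) < 1 + t := by linarith
  have h2 : (0:ℝ) < 1 - t := by linarith
  have h3 : (1:ℝ) - t^2 ≠ 0 := by nlinarith
  have hA := ((hasDerivAt_id t).const_mul 2).div ((hasDerivAt_pow 2 t).const_sub 1) h3
  have hB := ((hasDerivAt_id t).const_add 1).log h1.ne'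
  have hC := ((hasDerivAt_id t).const_sub 1).log h2.ne'
  have h := hA.sub (hB.sub hC)
  convert h using 1
  · rfl
  · rfl
  · rfl
  simp only [id_eq, Nat.cast_ofNat, pow_one]
  field_simp
  ring

lemma key_ineq {s : ℝ} (hs : s ∈ Set.Ioo (0:ℝ) 1) :
    Real.log (1+s) - Real.log (1-s) ≤ 2*s/(1-s^2) := by
  obtain ⟨hs0, hs1⟩ := hs
  set φ : ℝ → ℝ := fun t => 2*t/(1-t^2) - (Real.log (1+t) - Real.log (1-t)) with hφ
  have hmono : MonotoneOn φ (Set.Icc 0 s) := by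
    have hsub : Set.Icc (0:ℝ) s ⊆ Set.Ioo (-1:ℝ) 1 := fun t ⟨a, b⟩ => ⟨by linarith, by linarith⟩
    apply monotoneOn_of_deriv_nonneg (convex_Icc 0 s)
    · exact fun t ht => (phi_hasDerivAt (hsub ht)).continuousAt.continuousWithinAt
    · intro t ht
      rw [interior_Icc] at ht
      exact (phi_hasDerivAt (hsub (Set.Ioo_subset_Icc_self ht))).differentiableAt.differentiableWithinAt
    · intro t ht
      rw [interior_Icc] at ht
      rw [(phi_hasDerivAt (hsub (Set.Ioo_subset_Icc_self ht))).deriv]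
      positivity
  have h0 : φ 0 = 0 := by simp [hφ]
  have := hmono (Set.left_mem_Icc.2 hs0.le) (Set.right_mem_Icc.2 hs0.le) hs0.le
  rw [h0] at this
  simp only [hφ] at this
  linarith

-- first derivative
lemma f_hasDerivAt {x : ℝ} (hx : x ∈ Set.Ioo (0:ℝ) 1) :
    HasDerivAt (fun x => binEnt ((1 - Real.sqrt x) / 2))
      ((Real.log (1 - Real.sqrt x) - Real.log (1 + Real.sqrt x)) / (4 * Real.sqrt x * Real.log 2)) x := by
  obtain ⟨hx0, hx1⟩ := hx
  have hs0 : 0 < Real.sqrt x := Real.sqrt_pos.2 hx0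
  have hs1 : Real.sqrt x < 1 := by
    rw [show (1:ℝ) = Real.sqrt 1 by simp]
    exact Real.sqrt_lt_sqrt hx0.le hx1
  set s := Real.sqrt x with hs
  have hu : HasDerivAt (fun x => (1 - Real.sqrt x) / 2) (-(1 / (2 * s)) / 2) x :=
    ((Real.hasDerivAt_sqrt hx0.ne').const_sub 1).div_const 2
  have hp0 : (1 - s) / 2 ≠ 0 := ne_of_gt (by linarith)
  have hp1 : (1 - s) / 2 ≠ 1 := by intro h; nlinarith [Real.sqrt_nonneg x]
  have hb := (Real.hasDerivAt_binEntropy hp0 hp1).comp x hu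
  have hall := hb.div_const (Real.log 2)
  have hfn : (fun x => binEnt ((1 - Real.sqrt x) / 2)) =
      (fun x => (Real.binEntropy ∘ fun x => (1 - Real.sqrt x) / 2) x / Real.log 2) := by
    funext y; simp [binEnt_eq, Function.comp]
  rw [hfn]
  convert hall using 1
  · rfl
  · rfl
  have e1 : (1:ℝ) - (1 - s)/2 = (1+s)/2 := by ring
  rw [e1, Real.log_div (by linarith) two_ne_zero, Real.log_div (by linarith) two_ne_zero]
  have hl2 : Real.log 2 ≠ 0 := by
    simpa using Real.log_ne_zero_of_pos_of_ne_one two_pos (by norm_num)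
  field_simp [hs0.ne', hl2]
  ring

-- second derivative
lemma f'_hasDerivAt {x : ℝ} (hx : x ∈ Set.Ioo (0:ℝ) 1) :
    HasDerivAt (fun x => (Real.log (1 - Real.sqrt x) - Real.log (1 + Real.sqrt x)) / (4 * Real.sqrt x * Real.log 2))
      ((Real.log (1 + Real.sqrt x) - Real.log (1 - Real.sqrt x) - 2 * Real.sqrt x / (1 - x))
        / (8 * Real.sqrt x ^ 3 * Real.log 2)) x := by
  obtain ⟨hx0, hx1⟩ := hx
  have hs0 : 0 < Real.sqrt x := Real.sqrt_pos.2 hx0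
  have hs1 : Real.sqrt x < 1 := by
    rw [show (1:ℝ) = Real.sqrt 1 by simp]
    exact Real.sqrt_lt_sqrt hx0.le hx1
  set s := Real.sqrt x with hs
  have hsq : s ^ 2 = x := Real.sq_sqrt hx0.le
  have hl2 : Real.log 2 ≠ 0 := by
    simpa using Real.log_ne_zero_of_pos_of_ne_one two_pos (by norm_num)
  have hds : HasDerivAt Real.sqrt (1 / (2 * s)) x := Real.hasDerivAt_sqrt hx0.ne'
  have hl1 : HasDerivAt (fun x => Real.log (1 - Real.sqrt x)) (-(1 / (2 * s)) / (1 - s)) x :=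
    (hds.const_sub 1).log (by linarith)
  have hl2' : HasDerivAt (fun x => Real.log (1 + Real.sqrt x)) ((1 / (2 * s)) / (1 + s)) x :=
    (hds.const_add 1).log (by linarith)
  have hnum := hl1.sub hl2'
  have hden : HasDerivAt (fun x => 4 * Real.sqrt x * Real.log 2) (4 * (1 / (2 * s)) * Real.log 2) x :=
    (hds.const_mul 4).mul_const (Real.log 2)
  have hden_ne : 4 * s * Real.log 2 ≠ 0 := by
    apply mul_ne_zero (by positivity) hl2
  have h := hnum.div hden hden_ne
  convert h using 1
  · rfl
  · rfl
  · rfl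
  rw [← hsq]
  have hne1 : (1:ℝ) - s ≠ 0 := by nlinarith
  have hne2 : (1:ℝ) + s ≠ 0 := by nlinarith
  have hne3 : (1:ℝ) - s^2 ≠ 0 := by nlinarith
  simp only [Pi.sub_apply, Real.sqrt_sq hs0.le]
  field_simp [hs0.ne', hl2, hne1, hne2, hne3]
  ring

/-- `x ↦ h((1 − √x)/2)` is concave on `[0,1]`. -/
theorem binEnt_sqrt_concave :
    ConcaveOn ℝ (Set.Icc (0 : ℝ) 1) (fun x => binEnt ((1 - Real.sqrt x) / 2)) := by
  have hint : interior (Set.Icc (0:ℝ) 1) = Set.Ioo 0 1 := interior_Icc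
  apply concaveOn_of_hasDerivWithinAt2_nonpos (f' := fun x =>
      (Real.log (1 - Real.sqrt x) - Real.log (1 + Real.sqrt x)) / (4 * Real.sqrt x * Real.log 2))
    (f'' := fun x => (Real.log (1 + Real.sqrt x) - Real.log (1 - Real.sqrt x) - 2 * Real.sqrt x / (1 - x))
        / (8 * Real.sqrt x ^ 3 * Real.log 2))
    (convex_Icc 0 1)
  · have : (fun x => binEnt ((1 - Real.sqrt x) / 2)) =
        fun x => Real.binEntropy ((1 - Real.sqrt x) / 2) / Real.log 2 := by
      funext y; rw [binEnt_eq]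
    rw [this]
    fun_prop
  · intro x hx
    rw [hint] at hx ⊢
    exact (f_hasDerivAt hx).hasDerivWithinAt
  · intro x hx
    rw [hint] at hx ⊢
    exact (f'_hasDerivAt hx).hasDerivWithinAt
  · intro x hx
    rw [hint] at hx
    obtain ⟨hx0, hx1⟩ := hx
    have hs0 : 0 < Real.sqrt x := Real.sqrt_pos.2 hx0
    have hs1 : Real.sqrt x < 1 := by
      rw [show (1:ℝ) = Real.sqrt 1 by simp]
      exact Real.sqrt_lt_sqrt hx0.le hx1
    have hsq : Real.sqrt x ^ 2 = x := Real.sq_sqrt hx0.le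
    apply div_nonpos_of_nonpos_of_nonneg
    · have := key_ineq (s := Real.sqrt x) ⟨hs0, hs1⟩
      rw [hsq] at this
      linarith
    · have : 0 < Real.log 2 := Real.log_pos (by norm_num)
      positivity
end
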